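/- Let ρ : ℝ → (0,1) be a continuous injection and (X_n), (Y_n) sequences of real random variables such that E[|ρ(X_n) − ρ(Y_n)|] → 0 and (Y_n) is bounded in measure (i.e., for every ε > 0 there is R with P(|Y_n| > R) < ε for all n). Then X_n − Y_n → 0 in measure. -/

import Mathlib

open MeasureTheory Filter

lemma gap_aux (ρ : ℝ → ℝ) (hc : Continuous ρ) (hm : StrictMono ρ) (a R : ℝ) (ha : 0 < a) (hR : 0 < R) :
    ∃ η > 0, ∀ x y : ℝ, |y| ≤ R → a ≤ |x - y| → η ≤ |ρ x - ρ y| := by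
  set g : ℝ → ℝ := fun y => min (ρ (y + a) - ρ y) (ρ y - ρ (y - a)) with hg
  have hgc : Continuous g := by
    apply Continuous.min <;> fun_prop
  obtain ⟨y₀, hy₀, hmin⟩ := (isCompact_Icc (a := -R) (b := R)).exists_isMinOn
    ⟨0, by constructor <;> linarith⟩ hgc.continuousOn
  refine ⟨g y₀, lt_min (sub_pos.2 (hm (by linarith))) (sub_pos.2 (hm (by linarith))), ?_⟩
  intro x y hy hxy
  have hyI : y ∈ Set.Icc (-R) R := by
    rcases abs_le.mp hy with ⟨h1, h2⟩; exact ⟨h1, h2⟩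
  have hgy : g y₀ ≤ g y := hmin hyI
  rcases le_abs.mp hxy with h | h
  · -- a ≤ x - y, so x ≥ y + a
    have h1 : ρ (y + a) ≤ ρ x := hm.monotone (by linarith)
    have h2 : g y ≤ ρ (y + a) - ρ y := min_le_left _ _
    have : g y₀ ≤ ρ x - ρ y := by linarith
    calc g y₀ ≤ ρ x - ρ y := this
      _ ≤ |ρ x - ρ y| := le_abs_self _
  · -- a ≤ y - x, so x ≤ y - a
    have h1 : ρ x ≤ ρ (y - a) := hm.monotone (by linarith)
    have h2 : g y ≤ ρ y - ρ (y - a) := min_le_right _ _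
    have : g y₀ ≤ ρ y - ρ x := by linarith
    calc g y₀ ≤ -(ρ x - ρ y) := by linarith
      _ ≤ |ρ x - ρ y| := neg_le_abs _

lemma gap_aux' (ρ : ℝ → ℝ) (hc : Continuous ρ) (hi : Function.Injective ρ)
    (a R : ℝ) (ha : 0 < a) (hR : 0 < R) :
    ∃ η > 0, ∀ x y : ℝ, |y| ≤ R → a ≤ |x - y| → η ≤ |ρ x - ρ y| := by
  rcases hc.strictMono_of_inj hi with hm | hm
  · exact gap_aux ρ hc hm a R ha hR
  · obtain ⟨η, hη, H⟩ := gap_aux (fun x => -ρ x) hc.neg (fun x y hxy => by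
      simpa using hm hxy) a R ha hR
    refine ⟨η, hη, fun x y hy hxy => ?_⟩
    have h := H x y hy hxy
    have : |-ρ x - -ρ y| = |ρ x - ρ y| := by rw [← abs_neg]; ring_nf
    linarith [this ▸ h]

/-- If `ρ : ℝ → (0,1)` is a continuous injection, `E[|ρ(X n) - ρ(Y n)|] → 0`,
and `(Y n)` is bounded in measure, then `X n - Y n → 0` in measure. -/
theorem stmt_15 {Ω : Type*} [MeasurableSpace Ω] (μ : Measure Ω) [IsProbabilityMeasure μ]
    (ρ : ℝ → ℝ) (hρc : Continuous ρ) (hρi : Function.Injective ρ)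
    (hρr : ∀ x, ρ x ∈ Set.Ioo (0:ℝ) 1)
    (X Y : ℕ → Ω → ℝ) (hX : ∀ n, Measurable (X n)) (hY : ∀ n, Measurable (Y n))
    (hL1 : Tendsto (fun n => ∫ ω, |ρ (X n ω) - ρ (Y n ω)| ∂μ) atTop (nhds 0))
    (hbdd : ∀ ε : ℝ, 0 < ε → ∃ R : ℝ, ∀ n,
      μ {ω | R < |Y n ω|} < ENNReal.ofReal ε) :
    TendstoInMeasure μ (fun n ω => X n ω - Y n ω) atTop (fun _ => (0:ℝ)) := by
  -- measurability and integrability of |ρ∘X - ρ∘Y|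
  have hmeas : ∀ n, Measurable (fun ω => |ρ (X n ω) - ρ (Y n ω)|) := fun n =>
    ((hρc.measurable.comp (hX n)).sub (hρc.measurable.comp (hY n))).abs
  have hbound : ∀ n ω, |ρ (X n ω) - ρ (Y n ω)| ≤ 1 := by
    intro n ω
    obtain ⟨h1, h2⟩ := hρr (X n ω)
    obtain ⟨h3, h4⟩ := hρr (Y n ω)
    rw [abs_le]; constructor <;> linarith
  have hint : ∀ n, Integrable (fun ω => |ρ (X n ω) - ρ (Y n ω)|) μ := by
    intro n
    refine ⟨(hmeas n).aestronglyMeasurable, ?_⟩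
    apply MeasureTheory.HasFiniteIntegral.of_bounded (C := (1:ℝ))
    filter_upwards with ω
    simpa [abs_abs] using hbound n ω
  rw [tendstoInMeasure_iff_dist]
  intro a ha
  rw [ENNReal.tendsto_nhds_zero]
  intro ε' hε'
  set c : ENNReal := min ε' 1 with hc
  have hc0 : c ≠ 0 := (lt_min hε' one_pos).ne'
  have hctop : c ≠ ⊤ := (min_le_right _ _).trans_lt (by norm_num) |>.ne
  set d : ℝ := c.toReal with hd
  have hd0 : 0 < d := ENNReal.toReal_pos hc0 hctop
  obtain ⟨R, hR⟩ := hbdd (d / 4) (by positivity)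
  set R' : ℝ := max R 1 with hR'
  obtain ⟨η, hη, Hgap⟩ := gap_aux' ρ hρc hρi a R' ha (lt_of_lt_of_le one_pos (le_max_right _ _))
  have hev : ∀ᶠ n in atTop, (∫ ω, |ρ (X n ω) - ρ (Y n ω)| ∂μ) < η * (d / 2) :=
    hL1.eventually_lt_const (by positivity)
  filter_upwards [hev] with n hn
  -- set inclusion
  have hsub : {ω | a ≤ dist (X n ω - Y n ω) ((fun _ => (0:ℝ)) ω)} ⊆
      {ω | R' < |Y n ω|} ∪ {ω | η ≤ |ρ (X n ω) - ρ (Y n ω)|} := by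
    intro ω hω
    simp only [Real.dist_eq, sub_zero, Set.mem_setOf_eq] at hω
    by_contra hcon
    simp only [Set.mem_union, Set.mem_setOf_eq, not_or, not_lt, not_le] at hcon
    obtain ⟨h1, h2⟩ := hcon
    exact absurd (Hgap (X n ω) (Y n ω) h1 hω) (not_le.mpr h2)
  -- Markov bound for the second set
  have hmarkov : μ {ω | η ≤ |ρ (X n ω) - ρ (Y n ω)|} ≤ ENNReal.ofReal (d / 2) := by
    have hset : {ω | η ≤ |ρ (X n ω) - ρ (Y n ω)|}
        = {ω | ENNReal.ofReal η ≤ ENNReal.ofReal |ρ (X n ω) - ρ (Y n ω)|} := by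
      ext ω
      simp [ENNReal.ofReal_le_ofReal_iff (abs_nonneg _)]
    rw [hset]
    have h1 := meas_ge_le_lintegral_div (μ := μ)
      (f := fun ω => ENNReal.ofReal |ρ (X n ω) - ρ (Y n ω)|)
      ((ENNReal.measurable_ofReal.comp (hmeas n)).aemeasurable)
      (ε := ENNReal.ofReal η) (ENNReal.ofReal_pos.mpr hη).ne' ENNReal.ofReal_ne_top
    refine h1.trans ?_
    rw [← MeasureTheory.ofReal_integral_eq_lintegral_ofReal (hint n)
      (ae_of_all _ fun ω => abs_nonneg _)]
    rw [ENNReal.div_le_iff (ENNReal.ofReal_pos.mpr hη).ne' ENNReal.ofReal_ne_top]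
    rw [← ENNReal.ofReal_mul (by positivity)]
    exact ENNReal.ofReal_le_ofReal (by nlinarith [hn])
  calc μ {ω | a ≤ dist (X n ω - Y n ω) ((fun _ => (0:ℝ)) ω)}
      ≤ μ ({ω | R' < |Y n ω|} ∪ {ω | η ≤ |ρ (X n ω) - ρ (Y n ω)|}) := measure_mono hsub
    _ ≤ μ {ω | R' < |Y n ω|} + μ {ω | η ≤ |ρ (X n ω) - ρ (Y n ω)|} := measure_union_le _ _
    _ ≤ ENNReal.ofReal (d / 2) + ENNReal.ofReal (d / 2) := by
        refine add_le_add ?_ hmarkov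
        refine le_trans (measure_mono fun ω hω => ?_) ((hR n).le.trans ?_)
        · exact Set.mem_setOf_eq ▸ lt_of_le_of_lt (le_max_left R 1) hω
        · exact ENNReal.ofReal_le_ofReal (by linarith)
    _ = ENNReal.ofReal d := by
        rw [← ENNReal.ofReal_add (by positivity) (by positivity)]; ring_nf
    _ = c := by rw [hd, ENNReal.ofReal_toReal hctop]
    _ ≤ ε' := min_le_left _ _
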